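/- For all multisets Γ, Δ of ML_P formulas and every LL formula A: if t(Γ) ⊢_LL ?t(Δ), A is derivable in linear logic (where ?t(Δ) means each formula of t(Δ) is prefixed by ?), then t(Γ) ⊢_LL ?t(Δ), !A is derivable in linear logic. -/

import Mathlib

/-- Formulas of ML_P: `F ::= 0 | ⊥ | X | F∧F | F∨F | F→F` with variables from `V`. -/
inductive Fml (V : Type) : Type where
  | zero : Fml V
  | bot : Fml V
  | var : V → Fml V
  | and : Fml V → Fml V → Fml V
  | or : Fml V → Fml V → Fml V
  | imp : Fml V → Fml V → Fml V

/-- Formulas of propositional linear logic with `⊗`, `⊕`, `⊸`, `!`, `?` and `0`. -/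
inductive LLF (V : Type) : Type where
  | zero : LLF V
  | var : V → LLF V
  | tensor : LLF V → LLF V → LLF V
  | oplus : LLF V → LLF V → LLF V
  | limp : LLF V → LLF V → LLF V
  | bang : LLF V → LLF V
  | quest : LLF V → LLF V

/-- Two-sided sequent calculus for linear logic (on the fragment `⊗, ⊕, ⊸, !, ?, 0`):
axiom, cut, the `⊗`, `⊕`, `⊸` and `0` rules, dereliction, promotion, weakening and
contraction for the exponentials (exchange is built in via multisets). -/
inductive LL {V : Type} : Multiset (LLF V) → Multiset (LLF V) → Prop where
  | ax (A : LLF V) : LL {A} {A}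
  | cut {Γ Γ' Δ Δ' : Multiset (LLF V)} {A : LLF V} :
      LL Γ (Δ + {A}) → LL (Γ' + {A}) Δ' → LL (Γ + Γ') (Δ + Δ')
  | zeroL {Γ Δ : Multiset (LLF V)} : LL (Γ + {LLF.zero}) Δ
  | tensorL {Γ Δ : Multiset (LLF V)} {A B : LLF V} :
      LL (Γ + {A, B}) Δ → LL (Γ + {LLF.tensor A B}) Δ
  | tensorR {Γ Γ' Δ Δ' : Multiset (LLF V)} {A B : LLF V} :
      LL Γ (Δ + {A}) → LL Γ' (Δ' + {B}) → LL (Γ + Γ') (Δ + Δ' + {LLF.tensor A B})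
  | oplusL {Γ Δ : Multiset (LLF V)} {A B : LLF V} :
      LL (Γ + {A}) Δ → LL (Γ + {B}) Δ → LL (Γ + {LLF.oplus A B}) Δ
  | oplusR1 {Γ Δ : Multiset (LLF V)} {A B : LLF V} :
      LL Γ (Δ + {A}) → LL Γ (Δ + {LLF.oplus A B})
  | oplusR2 {Γ Δ : Multiset (LLF V)} {A B : LLF V} :
      LL Γ (Δ + {B}) → LL Γ (Δ + {LLF.oplus A B})
  | limpL {Γ Γ' Δ Δ' : Multiset (LLF V)} {A B : LLF V} :
      LL Γ (Δ + {A}) → LL (Γ' + {B}) Δ' → LL (Γ + Γ' + {LLF.limp A B}) (Δ + Δ')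
  | limpR {Γ Δ : Multiset (LLF V)} {A B : LLF V} :
      LL (Γ + {A}) (Δ + {B}) → LL Γ (Δ + {LLF.limp A B})
  | derL {Γ Δ : Multiset (LLF V)} {A : LLF V} :
      LL (Γ + {A}) Δ → LL (Γ + {LLF.bang A}) Δ
  | derR {Γ Δ : Multiset (LLF V)} {A : LLF V} :
      LL Γ (Δ + {A}) → LL Γ (Δ + {LLF.quest A})
  | promL {Γ Δ : Multiset (LLF V)} {A : LLF V} :
      LL (Γ.map LLF.bang + {A}) (Δ.map LLF.quest) →
      LL (Γ.map LLF.bang + {LLF.quest A}) (Δ.map LLF.quest)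
  | promR {Γ Δ : Multiset (LLF V)} {A : LLF V} :
      LL (Γ.map LLF.bang) (Δ.map LLF.quest + {A}) →
      LL (Γ.map LLF.bang) (Δ.map LLF.quest + {LLF.bang A})
  | weakL {Γ Δ : Multiset (LLF V)} {A : LLF V} :
      LL Γ Δ → LL (Γ + {LLF.bang A}) Δ
  | weakR {Γ Δ : Multiset (LLF V)} {A : LLF V} :
      LL Γ Δ → LL Γ (Δ + {LLF.quest A})
  | contrL {Γ Δ : Multiset (LLF V)} {A : LLF V} :
      LL (Γ + {LLF.bang A, LLF.bang A}) Δ → LL (Γ + {LLF.bang A}) Δ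
  | contrR {Γ Δ : Multiset (LLF V)} {A : LLF V} :
      LL Γ (Δ + {LLF.quest A, LLF.quest A}) → LL Γ (Δ + {LLF.quest A})

open Classical in
/-- The translation `t` from ML_P formulas to LL formulas:
`t(0) = t(⊥) = 0`, `t(X) = !X`, `t(A∧B) = !b(A) ⊗ !b(B)`, `t(A∨B) = !b(A) ⊕ !b(B)`,
`t(A→B) = !(t(A) ⊸ b(B))`, where `b(A) = ?t(A)` if `A ∈ P` and `b(A) = t(A)` otherwise. -/
noncomputable def tr {V : Type} (P : Set (Fml V)) : Fml V → LLF V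
  | Fml.zero => LLF.zero
  | Fml.bot => LLF.zero
  | Fml.var x => LLF.bang (LLF.var x)
  | Fml.and A B =>
      LLF.tensor (LLF.bang (if A ∈ P then LLF.quest (tr P A) else tr P A))
        (LLF.bang (if B ∈ P then LLF.quest (tr P B) else tr P B))
  | Fml.or A B =>
      LLF.oplus (LLF.bang (if A ∈ P then LLF.quest (tr P A) else tr P A))
        (LLF.bang (if B ∈ P then LLF.quest (tr P B) else tr P B))
  | Fml.imp A B =>
      LLF.bang (LLF.limp (tr P A) (if B ∈ P then LLF.quest (tr P B) else tr P B))

open Classical in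
/-- The translation `b` : `b(A) = ?t(A)` if `A ∈ P`, and `b(A) = t(A)` otherwise. -/
noncomputable def br {V : Type} (P : Set (Fml V)) (A : Fml V) : LLF V :=
  if A ∈ P then LLF.quest (tr P A) else tr P A

section Helpers
variable {V : Type}

private lemma add_sing {α : Type*} (s : Multiset α) (a : α) : s + {a} = a ::ₘ s := by
  rw [add_comm, Multiset.singleton_add]

/-- `!A ⊢ A`. -/
lemma LL.bang_elim (A : LLF V) : LL ({LLF.bang A} : Multiset (LLF V)) {A} := by
  have := LL.derL (Γ := (0 : Multiset (LLF V))) (Δ := ({A} : Multiset (LLF V))) (A := A)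
      (by simpa using LL.ax A)
  simpa using this

/-- `t(C) ⊢ !t(C)` for every ML formula `C`. -/
lemma tr_bang_intro (P : Set (Fml V)) (C : Fml V) :
    LL ({tr P C} : Multiset (LLF V)) {LLF.bang (tr P C)} := by
  have promR1 : ∀ (B A : LLF V), LL ({LLF.bang B} : Multiset (LLF V)) {A} →
      LL ({LLF.bang B} : Multiset (LLF V)) {LLF.bang A} := by
    intro B A h
    have := LL.promR (Γ := ({B} : Multiset (LLF V))) (Δ := 0) (A := A) (by simpa using h)
    simpa using this
  have promR2 : ∀ (B₁ B₂ A : LLF V),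
      LL ({LLF.bang B₁, LLF.bang B₂} : Multiset (LLF V)) {A} →
      LL ({LLF.bang B₁, LLF.bang B₂} : Multiset (LLF V)) {LLF.bang A} := by
    intro B₁ B₂ A h
    have := LL.promR (Γ := ({B₁, B₂} : Multiset (LLF V))) (Δ := 0) (A := A)
      (by simpa using h)
    simpa using this
  cases C with
  | zero => simpa [tr] using (LL.zeroL (Γ := (0 : Multiset (LLF V))) (Δ := {LLF.bang (tr P Fml.zero)}))
  | bot => simpa [tr] using (LL.zeroL (Γ := (0 : Multiset (LLF V))) (Δ := {LLF.bang (tr P Fml.bot)}))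
  | var x => exact promR1 _ _ (LL.ax _)
  | and A B =>
      show LL {LLF.tensor (LLF.bang (br P A)) (LLF.bang (br P B))} _
      have h1 : LL ({LLF.bang (br P A), LLF.bang (br P B)} : Multiset (LLF V))
          {LLF.tensor (LLF.bang (br P A)) (LLF.bang (br P B))} := by
        have := LL.tensorR (Γ := ({LLF.bang (br P A)} : Multiset (LLF V)))
          (Γ' := ({LLF.bang (br P B)} : Multiset (LLF V))) (Δ := 0) (Δ' := 0)
          (A := LLF.bang (br P A)) (B := LLF.bang (br P B))
          (by simpa using LL.ax _) (by simpa using LL.ax _)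
        simpa [Multiset.insert_eq_cons] using this
      have h2 := promR2 _ _ _ h1
      have := LL.tensorL (Γ := (0 : Multiset (LLF V)))
        (Δ := ({LLF.bang (LLF.tensor (LLF.bang (br P A)) (LLF.bang (br P B)))} : Multiset (LLF V)))
        (A := LLF.bang (br P A)) (B := LLF.bang (br P B)) (by simpa using h2)
      simpa [tr, br] using this
  | or A B =>
      show LL {LLF.oplus (LLF.bang (br P A)) (LLF.bang (br P B))} _
      have h1 : LL ({LLF.bang (br P A)} : Multiset (LLF V))
          {LLF.oplus (LLF.bang (br P A)) (LLF.bang (br P B))} := by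
        have := LL.oplusR1 (Γ := ({LLF.bang (br P A)} : Multiset (LLF V))) (Δ := 0)
          (A := LLF.bang (br P A)) (B := LLF.bang (br P B)) (by simpa using LL.ax _)
        simpa using this
      have h2 : LL ({LLF.bang (br P B)} : Multiset (LLF V))
          {LLF.oplus (LLF.bang (br P A)) (LLF.bang (br P B))} := by
        have := LL.oplusR2 (Γ := ({LLF.bang (br P B)} : Multiset (LLF V))) (Δ := 0)
          (A := LLF.bang (br P A)) (B := LLF.bang (br P B)) (by simpa using LL.ax _)
        simpa using this
      have := LL.oplusL (Γ := (0 : Multiset (LLF V)))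
        (Δ := ({LLF.bang (LLF.oplus (LLF.bang (br P A)) (LLF.bang (br P B)))} : Multiset (LLF V)))
        (A := LLF.bang (br P A)) (B := LLF.bang (br P B))
        (by simpa using promR1 _ _ h1) (by simpa using promR1 _ _ h2)
      simpa [tr, br] using this
  | imp A B => exact promR1 _ _ (LL.ax _)

/-- Replace each `t(C)` on the left by `!t(C)`. -/
lemma bang_left_all (P : Set (Fml V)) (Γ : Multiset (Fml V)) :
    ∀ (S Δ' : Multiset (LLF V)), LL (Γ.map (tr P) + S) Δ' →
      LL ((Γ.map (tr P)).map LLF.bang + S) Δ' := by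
  induction Γ using Multiset.induction with
  | empty => intro S Δ' h; simpa using h
  | cons a Γ ih =>
      intro S Δ' h
      have h' : LL ((Γ.map (tr P) + S) + {tr P a}) Δ' := by
        simpa [add_comm, Multiset.singleton_add, Multiset.add_cons,
          Multiset.cons_add, add_sing] using h
      have hc := LL.cut (Γ := ({LLF.bang (tr P a)} : Multiset (LLF V))) (Δ := 0)
        (Γ' := Γ.map (tr P) + S) (Δ' := Δ') (A := tr P a)
        (by simpa using LL.bang_elim (tr P a)) h'
      have := ih (LLF.bang (tr P a) ::ₘ S) Δ' (by
        simpa [Multiset.singleton_add, Multiset.add_cons, Multiset.cons_add,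
          add_comm, add_left_comm, add_sing] using hc)
      simpa [Multiset.singleton_add, Multiset.add_cons, Multiset.cons_add,
        add_comm, add_left_comm, add_sing] using this

/-- Replace each `!t(C)` on the left back by `t(C)`. -/
lemma unbang_left_all (P : Set (Fml V)) (Γ : Multiset (Fml V)) :
    ∀ (S Δ' : Multiset (LLF V)), LL ((Γ.map (tr P)).map LLF.bang + S) Δ' →
      LL (Γ.map (tr P) + S) Δ' := by
  induction Γ using Multiset.induction with
  | empty => intro S Δ' h; simpa using h
  | cons a Γ ih =>
      intro S Δ' h
      have h' : LL (((Γ.map (tr P)).map LLF.bang + S) + {LLF.bang (tr P a)}) Δ' := by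
        simpa [add_comm, Multiset.singleton_add, Multiset.add_cons,
          Multiset.cons_add, add_sing] using h
      have hc := LL.cut (Γ := ({tr P a} : Multiset (LLF V))) (Δ := 0)
        (Γ' := (Γ.map (tr P)).map LLF.bang + S) (Δ' := Δ') (A := LLF.bang (tr P a))
        (by simpa using tr_bang_intro P a) h'
      have := ih (tr P a ::ₘ S) Δ' (by
        simpa [Multiset.singleton_add, Multiset.add_cons, Multiset.cons_add,
          add_comm, add_left_comm, add_sing] using hc)
      simpa [Multiset.singleton_add, Multiset.add_cons, Multiset.cons_add,
        add_comm, add_left_comm, add_sing] using this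

end Helpers

/-- If `t(Γ) ⊢_LL ?t(Δ), A`, then `t(Γ) ⊢_LL ?t(Δ), !A`. -/
theorem bang_right {V : Type} (P : Set (Fml V)) (Γ Δ : Multiset (Fml V)) (A : LLF V)
    (h : LL (Γ.map (tr P)) ((Δ.map (tr P)).map LLF.quest + {A})) :
    LL (Γ.map (tr P)) ((Δ.map (tr P)).map LLF.quest + {LLF.bang A}) := by
  have h1 := bang_left_all P Γ 0 _ (by simpa using h)
  have h2 := LL.promR (Γ := Γ.map (tr P)) (Δ := Δ.map (tr P)) (A := A) (by simpa using h1)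
  have h3 := unbang_left_all P Γ 0 _ (by simpa using h2)
  simpa using h3
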